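/- The formal power series g(t) = Σ_{n≥0} (t^n/n!) g_n, with g_n = Σ_{|τ|=n} ω(τ)·τ, satisfies the Smoluchowski tree equation ∂_t g = graft(g, g) with initial condition g(0) = leaf, as an identity of formal power series with coefficients in the free vector space on rooted planar binary trees. -/

import Mathlib

/-- Rooted planar binary trees. -/
inductive PBTree : Type
  | leaf : PBTree
  | graft : PBTree → PBTree → PBTree
  deriving DecidableEq

namespace PBTree

/-- The grade of a tree: its number of internal vertices. -/
def grade : PBTree → ℕ
  | leaf => 0
  | graft t1 t2 => grade t1 + grade t2 + 1

/-- The weight character ω. -/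
def weight : PBTree → ℕ
  | leaf => 1
  | graft t1 t2 => Nat.choose (grade t1 + grade t2) (grade t1) * weight t1 * weight t2

/-- The bilinear extension of grafting, on coefficient functions. -/
def graftExt (f g : PBTree → ℚ) : PBTree → ℚ
  | leaf => 0
  | graft t1 t2 => f t1 * g t2

/-- `g_n = Σ_{|τ|=n} ω(τ)·τ`, as a coefficient function. -/
def gvec (n : ℕ) : PBTree → ℚ :=
  fun τ => if grade τ = n then (weight τ : ℚ) else 0

end PBTree

open PBTree in
/-- The formal power series `g(t) = Σ_{n≥0} (t^n/n!) g_n` satisfies the Smoluchowski tree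
equation `∂_t g = graft(g,g)` with `g(0) = leaf`, i.e. the coefficient identity
`g_{n+1}/n! = Σ_{j+k=n} graft(g_j/j!, g_k/k!)` holds for all `n`, and the constant
coefficient `g_0` is the single leaf. -/
theorem smoluchowski_tree_equation (n : ℕ) :
    (((Nat.factorial n : ℚ))⁻¹ • gvec (n + 1)
        = ∑ k ∈ Finset.range (n + 1),
            graftExt ((((Nat.factorial (n - k) : ℚ))⁻¹) • gvec (n - k))
              ((((Nat.factorial k : ℚ))⁻¹) • gvec k))
    ∧ gvec 0 = fun τ => if τ = PBTree.leaf then (1 : ℚ) else 0 := by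
  constructor
  · funext τ
    cases τ with
    | leaf =>
      simp [gvec, graftExt, PBTree.grade]
    | graft t1 t2 =>
      simp only [Pi.smul_apply, smul_eq_mul, Finset.sum_apply, graftExt, gvec,
        PBTree.grade, PBTree.weight, Nat.add_right_cancel_iff]
      by_cases h : t1.grade + t2.grade = n
      · rw [Finset.sum_eq_single_of_mem t2.grade (Finset.mem_range.mpr (by omega))]
        · have hnk : n - t2.grade = t1.grade := by omega
          rw [hnk, if_pos (by omega), if_pos rfl, if_pos rfl, h]
          have hfact : (Nat.choose n t1.grade : ℚ) * t1.grade.factorial *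
              t2.grade.factorial = n.factorial := by
            have h0 := Nat.choose_mul_factorial_mul_factorial (show t1.grade ≤ n by omega)
            have h2 : n - t1.grade = t2.grade := by omega
            rw [h2] at h0
            exact_mod_cast h0
          have h1 : (t1.grade.factorial : ℚ) ≠ 0 := by positivity
          have h2 : (t2.grade.factorial : ℚ) ≠ 0 := by positivity
          have h3 : (n.factorial : ℚ) ≠ 0 := by positivity
          push_cast
          field_simp
          linear_combination ((weight t1 : ℚ) * (weight t2 : ℚ)) * hfact
        · intro b hb hbne
          have hz : (if t2.grade = b then (t2.weight : ℚ) else 0) = 0 :=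
            if_neg (fun hh => hbne hh.symm)
          rw [hz]
          ring
      · rw [if_neg (by omega), Finset.sum_eq_zero]
        · ring
        · intro k hk
          simp only [Finset.mem_range] at hk
          rcases eq_or_ne t2.grade k with hk2 | hk2
          · rw [if_neg (show ¬ t1.grade = n - k by omega)]
            ring
          · rw [if_neg hk2]
            ring
  · funext τ
    cases τ <;> simp [gvec, PBTree.grade, PBTree.weight]
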